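/- arXiv:1104.0753 — 6 statements merged into one kernel-verified Lean document; each statement's English description precedes it below -/
import Mathlib

section
/- Let S be a finite nonempty set of points in the plane, let w_p > 0 be a weight for each p ∈ S, let ℓ > 0 be the highway length and v ≥ 1 the highway speed. Then the infimum, over all triples (f,t,t') of points of ℝ² with Euclidean distance ‖t−t'‖₂ = ℓ, of Σ_{p∈S} w_p · min{‖p−f‖₁, ‖p−t‖₁ + ℓ/v + ‖t'−f‖₁, ‖p−t'‖₁ + ℓ/v + ‖t−f‖₁} equals the infimum, over all pairs (f,t) of points of ℝ² with Euclidean distance ‖f−t‖₂ = ℓ, of Σ_{p∈S} w_p · min{‖p−f‖₁, ‖p−t‖₁ + ℓ/v}. In other words, the facility may be assumed to be located at one of the endpoints of the highway without changing the optimal total transportation cost. -/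
/-- The L1 (Manhattan) norm of a point of the plane. -/
def l1 (u : ℝ × ℝ) : ℝ := |u.1| + |u.2|

/-- The Euclidean norm of a point of the plane. -/
noncomputable def l2 (u : ℝ × ℝ) : ℝ := Real.sqrt (u.1 ^ 2 + u.2 ^ 2)

lemma l1_nonneg (u : ℝ × ℝ) : 0 ≤ l1 u :=
  add_nonneg (abs_nonneg _) (abs_nonneg _)

lemma l1_tri (a b : ℝ × ℝ) : l1 (a + b) ≤ l1 a + l1 b := by
  have h1 := abs_add_le a.1 b.1
  have h2 := abs_add_le a.2 b.2
  simp only [l1, Prod.fst_add, Prod.snd_add]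
  linarith

lemma l2_neg (u : ℝ × ℝ) : l2 (-u) = l2 u := by
  simp [l2, neg_pow]

/-- Key pointwise bound: if `l1 (t' - f) ≤ l1 (t - f) + r`, then the config with
facility `f` and highway endpoint `f + (t - t')` dominates. -/
lemma key_pointwise (p f t t' : ℝ × ℝ) (r : ℝ) (hr : 0 ≤ r)
    (h : l1 (t' - f) ≤ l1 (t - f) + r) :
    min (l1 (p - f)) (l1 (p - (f + (t - t'))) + r) ≤
      min (l1 (p - f))
        (min (l1 (p - t) + r + l1 (t' - f)) (l1 (p - t') + r + l1 (t - f))) := by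
  apply le_min (min_le_left _ _)
  apply le_min
  · refine le_trans (min_le_right _ _) ?_
    have : p - (f + (t - t')) = (p - t) + (t' - f) := by ring
    rw [this]
    have := l1_tri (p - t) (t' - f)
    linarith
  · refine le_trans (min_le_left _ _) ?_
    have : p - f = (p - t') + (t' - f) := by ring
    rw [this]
    have := l1_tri (p - t') (t' - f)
    linarith

/-- The facility may be assumed to be located at one of the endpoints of the highway
without changing the optimal total transportation cost. -/
theorem facility_at_endpoint
    (S : Finset (ℝ × ℝ)) (hS : S.Nonempty)
    (w : ℝ × ℝ → ℝ) (hw : ∀ p ∈ S, 0 < w p)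
    (ℓ v : ℝ) (hℓ : 0 < ℓ) (hv : 1 ≤ v) :
    sInf {c : ℝ | ∃ f t t' : ℝ × ℝ, l2 (t - t') = ℓ ∧
        c = ∑ p ∈ S, w p *
          min (l1 (p - f))
            (min (l1 (p - t) + ℓ / v + l1 (t' - f))
                 (l1 (p - t') + ℓ / v + l1 (t - f)))} =
    sInf {c : ℝ | ∃ f t : ℝ × ℝ, l2 (f - t) = ℓ ∧
        c = ∑ p ∈ S, w p * min (l1 (p - f)) (l1 (p - t) + ℓ / v)} := by
  have hv0 : 0 < v := lt_of_lt_of_le one_pos hv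
  have hr : 0 ≤ ℓ / v := div_nonneg hℓ.le hv0.le
  set A : Set ℝ := {c : ℝ | ∃ f t t' : ℝ × ℝ, l2 (t - t') = ℓ ∧
        c = ∑ p ∈ S, w p *
          min (l1 (p - f))
            (min (l1 (p - t) + ℓ / v + l1 (t' - f))
                 (l1 (p - t') + ℓ / v + l1 (t - f)))} with hA
  set B : Set ℝ := {c : ℝ | ∃ f t : ℝ × ℝ, l2 (f - t) = ℓ ∧
        c = ∑ p ∈ S, w p * min (l1 (p - f)) (l1 (p - t) + ℓ / v)} with hB
  -- both sets are bounded below by 0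
  have hAlb : ∀ c ∈ A, (0:ℝ) ≤ c := by
    rintro c ⟨f, t, t', -, rfl⟩
    refine Finset.sum_nonneg fun p hp => mul_nonneg (hw p hp).le ?_
    exact le_min (l1_nonneg _) (le_min
      (add_nonneg (add_nonneg (l1_nonneg _) hr) (l1_nonneg _))
      (add_nonneg (add_nonneg (l1_nonneg _) hr) (l1_nonneg _)))
  have hBlb : ∀ c ∈ B, (0:ℝ) ≤ c := by
    rintro c ⟨f, t, -, rfl⟩
    refine Finset.sum_nonneg fun p hp => mul_nonneg (hw p hp).le ?_
    exact le_min (l1_nonneg _) (add_nonneg (l1_nonneg _) hr)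
  have hAbdd : BddBelow A := ⟨0, hAlb⟩
  have hBbdd : BddBelow B := ⟨0, hBlb⟩
  -- B is nonempty
  have hBne : B.Nonempty := by
    refine ⟨_, (ℓ, 0), (0, 0), ?_, rfl⟩
    simp [l2, Real.sqrt_sq hℓ.le]
  -- B ⊆ A
  have hBA : B ⊆ A := by
    rintro c ⟨f, t, hft, rfl⟩
    refine ⟨f, f, t, by simpa using hft, ?_⟩
    refine Finset.sum_congr rfl fun p hp => ?_
    congr 1
    have h1 : l1 (f - f) = 0 := by simp [l1]
    rw [h1, add_zero]
    have hle : l1 (p - f) ≤ l1 (p - f) + ℓ / v + l1 (t - f) := by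
      have := l1_nonneg (t - f); linarith
    rw [← min_assoc, min_eq_left hle]
  have hAne : A.Nonempty := hBne.mono hBA
  apply le_antisymm
  · exact csInf_le_csInf hAbdd hBne hBA
  · -- for every c ∈ A there is c' ∈ B with c' ≤ c
    refine le_csInf hAne ?_
    rintro c ⟨f, t, t', htt, rfl⟩
    rcases le_or_gt (l1 (t' - f)) (l1 (t - f) + ℓ / v) with hcase | hcase
    · refine csInf_le_of_le hBbdd ⟨f, f + (t - t'), ?_, rfl⟩ ?_
      · have : f - (f + (t - t')) = -(t - t') := by ring
        rw [this, l2_neg, htt]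
      · refine Finset.sum_le_sum fun p hp => ?_
        exact mul_le_mul_of_nonneg_left (key_pointwise p f t t' (ℓ / v) hr hcase)
          (hw p hp).le
    · have hcase' : l1 (t - f) ≤ l1 (t' - f) + ℓ / v := by linarith
      refine csInf_le_of_le hBbdd ⟨f, f + (t' - t), ?_, rfl⟩ ?_
      · have : f - (f + (t' - t)) = t - t' := by ring
        rw [this, htt]
      · refine Finset.sum_le_sum fun p hp => ?_
        have h := key_pointwise p f t' t (ℓ / v) hr hcase'
        rw [min_comm (l1 (p - t') + ℓ / v + l1 (t - f))] at h
        exact mul_le_mul_of_nonneg_left h (hw p hp).le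
end

section
/- Let S be a finite nonempty set of points in the plane, let w_p > 0 be a weight for each p ∈ S, let ℓ > 0 and v ≥ 1, and define Φ(f,t) = Σ_{p∈S} w_p · min{‖p−f‖₁, ‖p−t‖₁ + ℓ/v} for pairs (f,t) of points of ℝ² with Euclidean distance ‖f−t‖₂ = ℓ. If the minimum of Φ over all such pairs is attained, then there exists a minimizing pair (f,t) that satisfies at least one of the following two conditions: (a) f or t is a vertex of the grid G(S); (b) one of the two points f, t has its y-coordinate equal to the y-coordinate of some point of S, and the other has its x-coordinate equal to the x-coordinate of some point of S. -/
/-- `u` is a vertex of the grid `G(S)`: its x-coordinate is the x-coordinate of some point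
of `S` and its y-coordinate is the y-coordinate of some point of `S`. -/
def IsGridVertex (S : Finset (ℝ × ℝ)) (u : ℝ × ℝ) : Prop :=
  (∃ p ∈ S, u.1 = p.1) ∧ (∃ q ∈ S, u.2 = q.2)

lemma min_add_min (a b c d : ℝ) : min a c + min b d ≤ min (a + b) (c + d) := by
  apply le_min
  · exact add_le_add (min_le_left a c) (min_le_left b d)
  · exact add_le_add (min_le_right a c) (min_le_right b d)

lemma abs_combo (A α z : ℝ) (hα : α ≤ 0) (hz : 0 ≤ z) (hA : A ≤ α ∨ z ≤ A) :
    z * |A - α| + (-α) * |A - z| = (z - α) * |A| := by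
  rcases hA with h | h
  · rw [abs_of_nonpos (by linarith : A - α ≤ 0), abs_of_nonpos (by linarith : A - z ≤ 0),
      abs_of_nonpos (by linarith : A ≤ 0)]
    ring
  · rw [abs_of_nonneg (by linarith : 0 ≤ A - α), abs_of_nonneg (by linarith : 0 ≤ A - z),
      abs_of_nonneg (by linarith : 0 ≤ A)]
    ring

lemma min_affine_combo (A B c d α z : ℝ) (hα : α ≤ 0) (hz : 0 ≤ z)
    (hA : A ≤ α ∨ z ≤ A) (hB : B ≤ α ∨ z ≤ B) :
    z * min (|A - α| + c) (|B - α| + d) + (-α) * min (|A - z| + c) (|B - z| + d)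
      ≤ (z - α) * min (|A| + c) (|B| + d) := by
  have hA' := abs_combo A α z hα hz hA
  have hB' := abs_combo B α z hα hz hB
  have h1 : (z - α) * min (|A| + c) (|B| + d)
      = min (z * (|A - α| + c) + (-α) * (|A - z| + c))
            (z * (|B - α| + d) + (-α) * (|B - z| + d)) := by
    rcases le_total (|A| + c) (|B| + d) with h | h
    · rw [min_eq_left h, min_eq_left (by nlinarith)]
      linarith [hA']
    · rw [min_eq_right h, min_eq_right (by nlinarith)]
      linarith [hB']
  rw [h1]
  calc z * min (|A - α| + c) (|B - α| + d) + (-α) * min (|A - z| + c) (|B - z| + d)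
      = min (z * (|A - α| + c)) (z * (|B - α| + d))
        + min ((-α) * (|A - z| + c)) ((-α) * (|B - z| + d)) := by
        rw [← mul_min_of_nonneg _ _ hz, ← mul_min_of_nonneg _ _ (by linarith : (0:ℝ) ≤ -α)]
    _ ≤ _ := min_add_min _ _ _ _

lemma shift_exists (S : Finset (ℝ × ℝ)) (hS : S.Nonempty) (w : ℝ × ℝ → ℝ)
    (hw : ∀ p ∈ S, 0 ≤ w p) (a b c d : ℝ × ℝ → ℝ) (G : ℝ → ℝ)
    (hG : ∀ s, G s = ∑ p ∈ S, w p * min (|a p - s| + c p) (|b p - s| + d p))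
    (hmin : ∀ s, G 0 ≤ G s) :
    ∃ s, G s ≤ G 0 ∧ ∃ p ∈ S, a p = s ∨ b p = s := by
  classical
  set A : Finset ℝ := S.image a ∪ S.image b with hA
  have hAmem : ∀ x, x ∈ A ↔ ∃ p ∈ S, a p = x ∨ b p = x := by
    intro x
    simp only [hA, Finset.mem_union, Finset.mem_image]
    constructor
    · rintro (⟨p, hp, h⟩ | ⟨p, hp, h⟩) <;> exact ⟨p, hp, by tauto⟩
    · rintro ⟨p, hp, h | h⟩
      · exact Or.inl ⟨p, hp, h⟩
      · exact Or.inr ⟨p, hp, h⟩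
  by_cases h0 : (0:ℝ) ∈ A
  · exact ⟨0, le_refl _, (hAmem 0).1 h0⟩
  have core : ∀ α z : ℝ, α ≤ 0 → 0 ≤ z →
      (∀ x ∈ A, x ≤ α ∨ z ≤ x) →
      z * G α + (-α) * G z ≤ (z - α) * G 0 := by
    intro α z hα hz hcov
    rw [hG α, hG z, hG 0, Finset.mul_sum, Finset.mul_sum, Finset.mul_sum,
      ← Finset.sum_add_distrib]
    apply Finset.sum_le_sum
    intro p hp
    have ha : a p ≤ α ∨ z ≤ a p := hcov _ ((hAmem _).2 ⟨p, hp, Or.inl rfl⟩)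
    have hb : b p ≤ α ∨ z ≤ b p := hcov _ ((hAmem _).2 ⟨p, hp, Or.inr rfl⟩)
    have key := min_affine_combo (a p) (b p) (c p) (d p) α z hα hz ha hb
    have hwp := hw p hp
    have h0' : ∀ x : ℝ, |x - 0| = |x| := by intro x; rw [sub_zero]
    rw [h0', h0']
    nlinarith [key, hwp, mul_le_mul_of_nonneg_left key hwp]
  have hAne : A.Nonempty := by
    obtain ⟨p, hp⟩ := hS
    exact ⟨a p, (hAmem _).2 ⟨p, hp, Or.inl rfl⟩⟩
  set N : Finset ℝ := A.filter (· < 0) with hN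
  set P : Finset ℝ := A.filter (0 < ·) with hP
  have hsplit : ∀ x ∈ A, x < 0 ∨ 0 < x := by
    intro x hx
    rcases lt_trichotomy x 0 with h | h | h
    · exact Or.inl h
    · exact absurd (h ▸ hx) h0
    · exact Or.inr h
  have main : ∃ α z : ℝ, α < 0 ∧ 0 < z ∧ (α ∈ A ∨ z ∈ A) ∧ (∀ x ∈ A, x ≤ α ∨ z ≤ x) := by
    by_cases hNne : N.Nonempty
    · set α := N.max' hNne with hαdef
      have hαA : α ∈ A := (Finset.mem_filter.1 (N.max'_mem hNne)).1
      have hαneg : α < 0 := (Finset.mem_filter.1 (N.max'_mem hNne)).2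
      by_cases hPne : P.Nonempty
      · set β := P.min' hPne with hβdef
        have hβpos : 0 < β := (Finset.mem_filter.1 (P.min'_mem hPne)).2
        refine ⟨α, β / 2, hαneg, by linarith, Or.inl hαA, ?_⟩
        intro x hx
        rcases hsplit x hx with h | h
        · exact Or.inl (N.le_max' x (Finset.mem_filter.2 ⟨hx, h⟩))
        · have := P.min'_le x (Finset.mem_filter.2 ⟨hx, h⟩)
          right; linarith
      · refine ⟨α, 1, hαneg, one_pos, Or.inl hαA, ?_⟩
        intro x hx
        rcases hsplit x hx with h | h
        · exact Or.inl (N.le_max' x (Finset.mem_filter.2 ⟨hx, h⟩))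
        · exact absurd ⟨x, Finset.mem_filter.2 ⟨hx, h⟩⟩ hPne
    · have hPne : P.Nonempty := by
        obtain ⟨x, hx⟩ := hAne
        rcases hsplit x hx with h | h
        · exact absurd ⟨x, Finset.mem_filter.2 ⟨hx, h⟩⟩ hNne
        · exact ⟨x, Finset.mem_filter.2 ⟨hx, h⟩⟩
      set β := P.min' hPne with hβdef
      have hβA : β ∈ A := (Finset.mem_filter.1 (P.min'_mem hPne)).1
      have hβpos : 0 < β := (Finset.mem_filter.1 (P.min'_mem hPne)).2
      refine ⟨-1, β, by norm_num, hβpos, Or.inr hβA, ?_⟩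
      intro x hx
      rcases hsplit x hx with h | h
      · exact absurd ⟨x, Finset.mem_filter.2 ⟨hx, h⟩⟩ hNne
      · exact Or.inr (P.min'_le x (Finset.mem_filter.2 ⟨hx, h⟩))
  obtain ⟨α, z, hα, hz, hmem, hcov⟩ := main
  have h1 := core α z hα.le hz.le hcov
  have h2 := hmin α
  have h3 := hmin z
  have hGα : G α ≤ G 0 := by nlinarith
  have hGz : G z ≤ G 0 := by nlinarith
  rcases hmem with h | h
  · exact ⟨α, hGα, (hAmem α).1 h⟩
  · exact ⟨z, hGz, (hAmem z).1 h⟩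

/-- If the minimum of `Φ` over highways of length `ℓ` is attained, then some minimizing
pair `(f, t)` satisfies condition (a) or condition (b). -/
theorem optimal_highway_structure
    (S : Finset (ℝ × ℝ)) (hS : S.Nonempty)
    (w : ℝ × ℝ → ℝ) (hw : ∀ p ∈ S, 0 < w p)
    (ℓ v : ℝ) (hℓ : 0 < ℓ) (hv : 1 ≤ v)
    (Φ : ℝ × ℝ → ℝ × ℝ → ℝ)
    (hΦ : ∀ f t, Φ f t = ∑ p ∈ S, w p * min (l1 (p - f)) (l1 (p - t) + ℓ / v))
    (hmin : ∃ f t : ℝ × ℝ, l2 (f - t) = ℓ ∧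
      ∀ f' t' : ℝ × ℝ, l2 (f' - t') = ℓ → Φ f t ≤ Φ f' t') :
    ∃ f t : ℝ × ℝ, l2 (f - t) = ℓ ∧
      (∀ f' t' : ℝ × ℝ, l2 (f' - t') = ℓ → Φ f t ≤ Φ f' t') ∧
      (IsGridVertex S f ∨ IsGridVertex S t ∨
        ((∃ p ∈ S, f.2 = p.2) ∧ (∃ q ∈ S, t.1 = q.1)) ∨
        ((∃ p ∈ S, t.2 = p.2) ∧ (∃ q ∈ S, f.1 = q.1))) := by
  obtain ⟨f, t, hft, hopt⟩ := hmin
  have hw0 : ∀ p ∈ S, 0 ≤ w p := fun p hp => (hw p hp).le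
  -- Step in the x-direction
  have step1 : ∀ f t : ℝ × ℝ, l2 (f - t) = ℓ →
      (∀ f' t', l2 (f' - t') = ℓ → Φ f t ≤ Φ f' t') →
      ∃ s : ℝ, Φ (f + (s, 0)) (t + (s, 0)) ≤ Φ f t ∧
        ∃ p ∈ S, (f + (s, 0)).1 = p.1 ∨ (t + (s, 0)).1 = p.1 := by
    intro f t hft hopt
    have hinv : ∀ s : ℝ, (f + (s, 0)) - (t + (s, 0)) = f - t := fun s =>
      add_sub_add_right_eq_sub f t (s, 0)
    have hl2 : ∀ s : ℝ, l2 ((f + (s, 0)) - (t + (s, 0))) = ℓ := fun s => by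
      rw [hinv s, hft]
    have h0f : f + ((0 : ℝ), (0 : ℝ)) = f := by ext <;> simp
    have h0t : t + ((0 : ℝ), (0 : ℝ)) = t := by ext <;> simp
    obtain ⟨s, hs1, p, hp, hps⟩ := shift_exists S hS w hw0
      (fun p => p.1 - f.1) (fun p => p.1 - t.1)
      (fun p => |p.2 - f.2|) (fun p => |p.2 - t.2| + ℓ / v)
      (fun s => Φ (f + (s, 0)) (t + (s, 0)))
      (by
        intro s
        rw [hΦ]
        refine Finset.sum_congr rfl fun p hp => ?_
        have e1 : p - (f + (s, 0)) = (p.1 - f.1 - s, p.2 - f.2) := by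
          ext <;> simp <;> ring
        have e2 : p - (t + (s, 0)) = (p.1 - t.1 - s, p.2 - t.2) := by
          ext <;> simp <;> ring
        rw [e1, e2]
        simp only [l1]
        rw [add_assoc])
      (by
        intro s
        simp only [h0f, h0t]
        exact hopt _ _ (hl2 s))
    simp only [h0f, h0t] at hs1
    refine ⟨s, hs1, p, hp, ?_⟩
    have hf1 : (f + (s, 0)).1 = f.1 + s := rfl
    have ht1 : (t + (s, 0)).1 = t.1 + s := rfl
    rcases hps with h | h
    · left; rw [hf1]; linarith
    · right; rw [ht1]; linarith
  -- Step in the y-direction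
  have step2 : ∀ f t : ℝ × ℝ, l2 (f - t) = ℓ →
      (∀ f' t', l2 (f' - t') = ℓ → Φ f t ≤ Φ f' t') →
      ∃ s : ℝ, Φ (f + (0, s)) (t + (0, s)) ≤ Φ f t ∧
        ∃ p ∈ S, (f + (0, s)).2 = p.2 ∨ (t + (0, s)).2 = p.2 := by
    intro f t hft hopt
    have hinv : ∀ s : ℝ, (f + (0, s)) - (t + (0, s)) = f - t := fun s =>
      add_sub_add_right_eq_sub f t (0, s)
    have hl2 : ∀ s : ℝ, l2 ((f + (0, s)) - (t + (0, s))) = ℓ := fun s => by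
      rw [hinv s, hft]
    have h0f : f + ((0 : ℝ), (0 : ℝ)) = f := by ext <;> simp
    have h0t : t + ((0 : ℝ), (0 : ℝ)) = t := by ext <;> simp
    obtain ⟨s, hs1, p, hp, hps⟩ := shift_exists S hS w hw0
      (fun p => p.2 - f.2) (fun p => p.2 - t.2)
      (fun p => |p.1 - f.1|) (fun p => |p.1 - t.1| + ℓ / v)
      (fun s => Φ (f + (0, s)) (t + (0, s)))
      (by
        intro s
        rw [hΦ]
        refine Finset.sum_congr rfl fun p hp => ?_
        have e1 : p - (f + (0, s)) = (p.1 - f.1, p.2 - f.2 - s) := by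
          ext <;> simp <;> ring
        have e2 : p - (t + (0, s)) = (p.1 - t.1, p.2 - t.2 - s) := by
          ext <;> simp <;> ring
        rw [e1, e2]
        simp only [l1]
        rw [add_comm (|p.1 - f.1|) (|p.2 - f.2 - s|),
          add_comm (|p.1 - t.1|) (|p.2 - t.2 - s|), add_assoc])
      (by
        intro s
        simp only [h0f, h0t]
        exact hopt _ _ (hl2 s))
    simp only [h0f, h0t] at hs1
    refine ⟨s, hs1, p, hp, ?_⟩
    have hf2 : (f + (0, s)).2 = f.2 + s := rfl
    have ht2 : (t + (0, s)).2 = t.2 + s := rfl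
    rcases hps with h | h
    · left; rw [hf2]; linarith
    · right; rw [ht2]; linarith
  -- combine the two shifts
  obtain ⟨s₁, hΦ1, p₁, hp₁, hx⟩ := step1 f t hft hopt
  have hinv1 : (f + (s₁, 0)) - (t + (s₁, 0)) = f - t := add_sub_add_right_eq_sub f t (s₁, 0)
  have hft₁ : l2 ((f + (s₁, 0)) - (t + (s₁, 0))) = ℓ := by rw [hinv1, hft]
  have hopt₁ : ∀ f' t', l2 (f' - t') = ℓ → Φ (f + (s₁, 0)) (t + (s₁, 0)) ≤ Φ f' t' :=
    fun f' t' h => le_trans hΦ1 (hopt f' t' h)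
  obtain ⟨s₂, hΦ2, p₂, hp₂, hy⟩ := step2 (f + (s₁, 0)) (t + (s₁, 0)) hft₁ hopt₁
  set f₂ := f + (s₁, 0) + (0, s₂) with hf₂def
  set t₂ := t + (s₁, 0) + (0, s₂) with ht₂def
  have hinv2 : f₂ - t₂ = f - t := by
    rw [hf₂def, ht₂def, add_sub_add_right_eq_sub, add_sub_add_right_eq_sub]
  have hft₂ : l2 (f₂ - t₂) = ℓ := by rw [hinv2, hft]
  have hopt₂ : ∀ f' t', l2 (f' - t') = ℓ → Φ f₂ t₂ ≤ Φ f' t' :=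
    fun f' t' h => le_trans hΦ2 (hopt₁ f' t' h)
  have hf₂1 : f₂.1 = (f + (s₁, 0)).1 := by
    rw [hf₂def, Prod.fst_add]; simp
  have ht₂1 : t₂.1 = (t + (s₁, 0)).1 := by
    rw [ht₂def, Prod.fst_add]; simp
  refine ⟨f₂, t₂, hft₂, hopt₂, ?_⟩
  rcases hx with h1 | h1 <;> rcases hy with h2 | h2
  · exact Or.inl ⟨⟨p₁, hp₁, by rw [hf₂1]; exact h1⟩, ⟨p₂, hp₂, h2⟩⟩
  · exact Or.inr (Or.inr (Or.inr ⟨⟨p₂, hp₂, h2⟩, ⟨p₁, hp₁, by rw [hf₂1]; exact h1⟩⟩))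
  · exact Or.inr (Or.inr (Or.inl ⟨⟨p₂, hp₂, h2⟩, ⟨p₁, hp₁, by rw [ht₂1]; exact h1⟩⟩))
  · exact Or.inr (Or.inl ⟨⟨p₁, hp₁, by rw [ht₂1]; exact h1⟩, ⟨p₂, hp₂, h2⟩⟩)
end

section
/- Let f, t, p ∈ ℝ² and c ≥ 0, and define d_t(p,f) = min{‖p−f‖₁, ‖p−t‖₁ + c}. Suppose that p strictly goes directly to the facility, i.e. ‖p−f‖₁ < ‖p−t‖₁ + c, and that p is vertically aligned with f, i.e. the x-coordinate of p equals the x-coordinate of f. Then there exists δ > 0 such that for all ε ∈ (−δ, δ), d_{t+(ε,0)}(p, f+(ε,0)) = d_t(p,f) + |ε|; that is, translating the highway horizontally in either direction increases the travel time of p. -/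
/-- Travel time with facility `f`, highway entry `t`, traversal time `c`. -/
def travelTime (c : ℝ) (t f p : ℝ × ℝ) : ℝ :=
  min (l1 (p - f)) (l1 (p - t) + c)

/-- If `p` strictly walks to the facility and is vertically aligned with `f`, then a small
horizontal translation of the highway by `ε` increases the travel time by `|ε|`. -/
theorem travelTime_aligned_walker
    (f t p : ℝ × ℝ) (c : ℝ) (hc : 0 ≤ c)
    (hwalk : l1 (p - f) < l1 (p - t) + c)
    (hx : p.1 = f.1) :
    ∃ δ > 0, ∀ ε : ℝ, -δ < ε → ε < δ →
      travelTime c (t + (ε, 0)) (f + (ε, 0)) p = travelTime c t f p + |ε| := by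
  refine ⟨(l1 (p - t) + c - l1 (p - f)) / 2, by linarith, fun ε h1 h2 => ?_⟩
  have habs : |ε| < (l1 (p - t) + c - l1 (p - f)) / 2 := abs_lt.2 ⟨by linarith, h2⟩
  have e1 : l1 (p - (f + (ε, 0))) = l1 (p - f) + |ε| := by
    simp only [l1, Prod.fst_sub, Prod.snd_sub, Prod.fst_add, Prod.snd_add, hx]
    have : f.1 - (f.1 + ε) = -ε := by ring
    simp [this, abs_neg]
    ring
  have e2 : l1 (p - t) - |ε| ≤ l1 (p - (t + (ε, 0))) := by
    have h := abs_sub_abs_le_abs_sub (p.1 - t.1) ε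
    have : p.1 - t.1 - ε = p.1 - (t.1 + ε) := by ring
    rw [this] at h
    simp only [l1, Prod.fst_sub, Prod.snd_sub, Prod.fst_add, Prod.snd_add, add_zero]
    linarith
  have old : travelTime c t f p = l1 (p - f) :=
    min_eq_left (le_of_lt hwalk)
  have new : travelTime c (t + (ε, 0)) (f + (ε, 0)) p = l1 (p - f) + |ε| := by
    rw [travelTime, e1]
    exact min_eq_left (by linarith)
  rw [new, old]
end

section
/- Let a = (−4, 0) and b = (−3, −1), let y₀ ∈ {5, 7, 8}, and let C = { e ∈ ℝ² : (e₁ − 12)² + (e₂ − y₀)² = 180 and e₁ ≤ 12 } be the left half of the circle of Euclidean radius √180 centered at (12, y₀). Let e* = (12 − √(180 − y₀²), 0), which belongs to C. Then for every e ∈ C, ‖a − e*‖₁ + ‖b − e*‖₁ ≤ ‖a − e‖₁ + ‖b − e‖₁; that is, among the possible locations of the second highway endpoint, the sum of L1 distances from a and b is minimized at the point of C lying on the line y = 0. -/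
/-- Among the points of the left half of the circle of radius `√180` centered at
`(12, y₀)`, `y₀ ∈ {5,7,8}`, the sum of L1 distances from `a = (-4,0)` and `b = (-3,-1)`
is minimized at the point `e* = (12 - √(180 - y₀²), 0)` on the line `y = 0`. -/
theorem optimal_endpoint_on_axis (y₀ : ℝ) (hy₀ : y₀ = 5 ∨ y₀ = 7 ∨ y₀ = 8) :
    ((12 - Real.sqrt (180 - y₀ ^ 2) : ℝ), (0 : ℝ)) ∈
      {e : ℝ × ℝ | (e.1 - 12) ^ 2 + (e.2 - y₀) ^ 2 = 180 ∧ e.1 ≤ 12} ∧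
    ∀ e ∈ {e : ℝ × ℝ | (e.1 - 12) ^ 2 + (e.2 - y₀) ^ 2 = 180 ∧ e.1 ≤ 12},
      l1 (((-4 : ℝ), (0 : ℝ)) - ((12 - Real.sqrt (180 - y₀ ^ 2) : ℝ), (0 : ℝ))) +
      l1 (((-3 : ℝ), (-1 : ℝ)) - ((12 - Real.sqrt (180 - y₀ ^ 2) : ℝ), (0 : ℝ))) ≤
      l1 (((-4 : ℝ), (0 : ℝ)) - e) + l1 (((-3 : ℝ), (-1 : ℝ)) - e) := by
  have hy1 : 5 ≤ y₀ := by rcases hy₀ with h | h | h <;> norm_num [h]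
  have hy2 : y₀ ≤ 8 := by rcases hy₀ with h | h | h <;> norm_num [h]
  set s := Real.sqrt (180 - y₀ ^ 2) with hsdef
  have h180 : (0:ℝ) ≤ 180 - y₀ ^ 2 := by nlinarith
  have hs0 : 0 ≤ s := Real.sqrt_nonneg _
  have hs2 : s ^ 2 = 180 - y₀ ^ 2 := Real.sq_sqrt h180
  have hsy : y₀ ≤ s := by nlinarith
  have hs15 : s < 15 := by nlinarith
  constructor
  · refine ⟨?_, by simp; linarith⟩
    simp only [Set.mem_setOf_eq]
    ring_nf
    nlinarith [hs2]
  · rintro ⟨x, y⟩ ⟨h1, h2⟩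
    simp only [Set.mem_setOf_eq] at h1 h2
    have hr2 : (12 - x) ^ 2 = 180 - (y - y₀) ^ 2 := by nlinarith [h1]
    have hr0 : 0 ≤ 12 - x := by linarith
    have hr15 : 12 - x < 15 := by nlinarith
    have hL1 : l1 (((-4 : ℝ), (0 : ℝ)) - ((12 - s : ℝ), (0 : ℝ))) = 16 - s := by
      simp only [l1, Prod.fst_sub, Prod.snd_sub]
      rw [show (-4 : ℝ) - (12 - s) = -(16 - s) by ring, abs_neg,
        abs_of_nonneg (by linarith)]
      norm_num
    have hL2 : l1 (((-3 : ℝ), (-1 : ℝ)) - ((12 - s : ℝ), (0 : ℝ))) = 16 - s := by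
      simp only [l1, Prod.fst_sub, Prod.snd_sub]
      rw [show (-3 : ℝ) - (12 - s) = -(15 - s) by ring, abs_neg,
        abs_of_nonneg (by linarith)]
      norm_num
      ring
    have hR1 : l1 (((-4 : ℝ), (0 : ℝ)) - (x, y)) = (x + 4) + |y| := by
      simp only [l1, Prod.fst_sub, Prod.snd_sub]
      rw [show (-4 : ℝ) - x = -(x + 4) by ring, abs_neg,
        abs_of_nonneg (by linarith), show (0 : ℝ) - y = -y by ring, abs_neg]
    have hR2 : l1 (((-3 : ℝ), (-1 : ℝ)) - (x, y)) = (x + 3) + |y + 1| := by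
      simp only [l1, Prod.fst_sub, Prod.snd_sub]
      rw [show (-3 : ℝ) - x = -(x + 3) by ring, abs_neg,
        abs_of_nonneg (by linarith), show (-1 : ℝ) - y = -(y + 1) by ring, abs_neg]
    rw [hL1, hL2, hR1, hR2]
    -- goal: (16 - s) + (16 - s) ≤ (x + 4) + |y| + ((x + 3) + |y + 1|)
    rcases le_or_gt 0 y with hy | hy
    · rw [abs_of_nonneg hy, abs_of_nonneg (by linarith : (0:ℝ) ≤ y + 1)]
      -- need 2*(12 - x) ≤ 2*s + 2*y, from (12-x)^2 ≤ (s+y)^2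
      have key : 12 - x ≤ s + y := by
        nlinarith [hr2, hs2, mul_nonneg hy (by linarith : (0:ℝ) ≤ s - y₀ + y),
          sq_nonneg (12 - x - (s + y))]
      linarith
    · have key : 12 - x ≤ s := by
        nlinarith [hr2, hs2, mul_nonneg (by linarith : (0:ℝ) ≤ -y)
          (by linarith : (0:ℝ) ≤ 2 * y₀ - y), sq_nonneg (12 - x - s)]
      rw [abs_of_nonpos (le_of_lt hy)]
      rcases le_or_gt 0 (y + 1) with h3 | h3
      · rw [abs_of_nonneg h3]; linarith
      · rw [abs_of_nonpos (le_of_lt h3)]; linarith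
end

section
/- Let S = {(−4,0), (−3,−1), (12,8), (13,5), (13,7)} with unit weights, and define Φ(f,t) = Σ_{p∈S} min{‖p−f‖₁, ‖p−t‖₁ + 1}. For ε ∈ [12 − √155, 12 − √131], let t_ε = (ε, 0) and f_ε = (12, √(36 + 24ε − ε²)), so that f_ε and t_ε are at Euclidean distance √180 and f₀ = (12,6), t₀ = (0,0). Then for every such ε, Φ(f_ε, t_ε) − Φ(f₀, t₀) = 2ε − (√(36 + 24ε − ε²) − 6). -/
/-- The five demand points of the counterexample instance. -/
noncomputable def Spts : Finset (ℝ × ℝ) :=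
  {((-4 : ℝ), (0 : ℝ)), ((-3 : ℝ), (-1 : ℝ)), ((12 : ℝ), (8 : ℝ)),
   ((13 : ℝ), (5 : ℝ)), ((13 : ℝ), (7 : ℝ))}

/-- Total transportation cost (unit weights, traversal time 1). -/
noncomputable def Phi (f t : ℝ × ℝ) : ℝ :=
  ∑ p ∈ Spts, min (l1 (p - f)) (l1 (p - t) + 1)

lemma sum_Spts (g : ℝ × ℝ → ℝ) :
    ∑ p ∈ Spts, g p = g (-4,0) + g (-3,-1) + g (12,8) + g (13,5) + g (13,7) := by
  norm_num [Spts, Finset.sum_insert, Finset.mem_insert, Finset.mem_singleton, Prod.ext_iff]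
  ring

/-- The change of the objective function along the one-parameter family of highways
`t_ε = (ε, 0)`, `f_ε = (12, √(36 + 24ε - ε²))` equals `2ε - (√(36 + 24ε - ε²) - 6)`. -/
theorem perturbation_cost_change (ε : ℝ)
    (h1 : 12 - Real.sqrt 155 ≤ ε) (h2 : ε ≤ 12 - Real.sqrt 131) :
    Phi ((12 : ℝ), Real.sqrt (36 + 24 * ε - ε ^ 2)) ((ε : ℝ), (0 : ℝ)) -
      Phi ((12 : ℝ), (6 : ℝ)) ((0 : ℝ), (0 : ℝ)) =
    2 * ε - (Real.sqrt (36 + 24 * ε - ε ^ 2) - 6) := by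
  have h155 : Real.sqrt 155 ≤ 13 := by
    nlinarith [Real.sq_sqrt (by norm_num : (155:ℝ) ≥ 0), Real.sqrt_nonneg (155:ℝ)]
  have h131 : (11:ℝ) ≤ Real.sqrt 131 := by
    nlinarith [Real.sq_sqrt (by norm_num : (131:ℝ) ≥ 0), Real.sqrt_nonneg (131:ℝ)]
  have hεl : (-1:ℝ) ≤ ε := by linarith
  have hεu : ε ≤ 1 := by linarith
  set s := Real.sqrt (36 + 24 * ε - ε ^ 2) with hs
  have hsq155 : (12 - ε)^2 ≤ 155 := by
    nlinarith [Real.sq_sqrt (by norm_num : (155:ℝ) ≥ 0), Real.sqrt_nonneg (155:ℝ)]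
  have hsq131 : (131:ℝ) ≤ (12 - ε)^2 := by
    nlinarith [Real.sq_sqrt (by norm_num : (131:ℝ) ≥ 0), Real.sqrt_nonneg (131:ℝ)]
  have hs5 : (5:ℝ) ≤ s := by
    rw [hs, show (5:ℝ) = Real.sqrt 25 by rw [show (25:ℝ) = 5^2 by norm_num,
      Real.sqrt_sq (by norm_num)]]
    exact Real.sqrt_le_sqrt (by nlinarith)
  have hs7 : s ≤ 7 := by
    rw [hs, show (7:ℝ) = Real.sqrt 49 by rw [show (49:ℝ) = 7^2 by norm_num,
      Real.sqrt_sq (by norm_num)]]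
    exact Real.sqrt_le_sqrt (by nlinarith)
  have hPhi1 : Phi ((12 : ℝ), s) ((ε : ℝ), (0 : ℝ)) = 22 + 2*ε - s := by
    rw [Phi, sum_Spts]
    simp only [l1, Prod.mk_sub_mk]
    rw [show |(-4:ℝ) - 12| = 16 by norm_num [abs_of_nonpos],
        show |(0:ℝ) - s| = s from by rw [abs_sub_comm, abs_of_nonneg (by linarith), sub_zero],
        show |(-4:ℝ) - ε| = 4 + ε from by rw [abs_of_nonpos (by linarith)]; ring,
        show |(0:ℝ) - 0| = 0 by norm_num,
        show |(-3:ℝ) - 12| = 15 by norm_num [abs_of_nonpos],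
        show |(-1:ℝ) - s| = 1 + s from by rw [abs_of_nonpos (by linarith)]; ring,
        show |(-3:ℝ) - ε| = 3 + ε from by rw [abs_of_nonpos (by linarith)]; ring,
        show |(-1:ℝ) - 0| = 1 by norm_num,
        show |(12:ℝ) - 12| = 0 by norm_num,
        show |(8:ℝ) - s| = 8 - s from by rw [abs_of_nonneg (by linarith)],
        show |(12:ℝ) - ε| = 12 - ε from by rw [abs_of_nonneg (by linarith)],
        show |(8:ℝ) - 0| = 8 by norm_num,
        show |(13:ℝ) - 12| = 1 by norm_num,
        show |(5:ℝ) - s| = s - 5 from by rw [abs_of_nonpos (by linarith)]; ring,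
        show |(13:ℝ) - ε| = 13 - ε from by rw [abs_of_nonneg (by linarith)],
        show |(5:ℝ) - 0| = 5 by norm_num,
        show |(7:ℝ) - s| = 7 - s from by rw [abs_of_nonneg (by linarith)],
        show |(7:ℝ) - 0| = 7 by norm_num]
    rw [min_eq_right (by linarith), min_eq_right (by linarith),
        min_eq_left (by linarith), min_eq_left (by linarith), min_eq_left (by linarith)]
    ring
  have hPhi0 : Phi ((12 : ℝ), (6:ℝ)) ((0 : ℝ), (0 : ℝ)) = 16 := by
    rw [Phi, sum_Spts]
    norm_num [l1, Prod.mk_sub_mk, abs_of_nonpos, abs_of_nonneg]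
  rw [hPhi1, hPhi0]; ring
end

section
/- Let S = {(−4,0), (−3,−1), (12,8), (13,5), (13,7)} with unit weights, and define Φ(f,t) = Σ_{p∈S} min{‖p−f‖₁, ‖p−t‖₁ + 1}. For ε ∈ [12 − √155, 12 − √131], let t_ε = (ε, 0) and f_ε = (12, √(36 + 24ε − ε²)). Then for every such ε with ε ≠ 0, Φ(f_ε, t_ε) > Φ(f₀, t₀), where f₀ = (12,6) and t₀ = (0,0); that is, the highway with endpoints f₀ = (12,6) and t₀ = (0,0) is strictly better than every nearby highway in this one-parameter family. -/
set_option maxHeartbeats 1000000 in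
/-- The highway with endpoints `f₀ = (12,6)` and `t₀ = (0,0)` is strictly better than
every other nearby highway in the one-parameter family `t_ε = (ε, 0)`,
`f_ε = (12, √(36 + 24ε - ε²))`. -/
theorem family_strict_optimality (ε : ℝ)
    (h1 : 12 - Real.sqrt 155 ≤ ε) (h2 : ε ≤ 12 - Real.sqrt 131) (h0 : ε ≠ 0) :
    Phi ((12 : ℝ), (6 : ℝ)) ((0 : ℝ), (0 : ℝ)) <
      Phi ((12 : ℝ), Real.sqrt (36 + 24 * ε - ε ^ 2)) ((ε : ℝ), (0 : ℝ)) := by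
  have s155 : Real.sqrt 155 ^ 2 = 155 := Real.sq_sqrt (by norm_num)
  have s131 : Real.sqrt 131 ^ 2 = 131 := Real.sq_sqrt (by norm_num)
  have s155n : 0 ≤ Real.sqrt 155 := Real.sqrt_nonneg _
  have s131n : 0 ≤ Real.sqrt 131 := Real.sqrt_nonneg _
  have h155 : Real.sqrt 155 ≤ 13 := by nlinarith
  have h131 : 11 ≤ Real.sqrt 131 := by nlinarith
  have hεl : -1 ≤ ε := by linarith
  have hεu : ε ≤ 1 := by linarith
  -- bounds on A = 36 + 24ε - ε²
  have hAub : (12 - ε) ^ 2 ≤ 155 := by nlinarith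
  have hAlb : 131 ≤ (12 - ε) ^ 2 := by nlinarith
  have hA25 : 25 ≤ 36 + 24 * ε - ε ^ 2 := by nlinarith
  have hA49 : 36 + 24 * ε - ε ^ 2 ≤ 49 := by nlinarith
  set y := Real.sqrt (36 + 24 * ε - ε ^ 2) with hy_def
  have hysq : y ^ 2 = 36 + 24 * ε - ε ^ 2 := Real.sq_sqrt (by linarith)
  have hyn : 0 ≤ y := Real.sqrt_nonneg _
  have hy5 : 5 ≤ y := by nlinarith
  have hy7 : y ≤ 7 := by nlinarith
  have hkey : y < 6 + 2 * ε := by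
    have hε2 : 0 < ε ^ 2 := by rcases h0.lt_or_gt with h | h <;> nlinarith
    nlinarith
  norm_num [Phi, Spts, l1, Finset.sum_insert, Finset.mem_insert,
    Finset.mem_singleton, Prod.ext_iff, Prod.mk_sub_mk]
  rw [abs_of_nonneg hyn,
    show |(-4 : ℝ) - ε| = 4 + ε by rw [abs_of_nonpos (by linarith)]; ring,
    show |(-1 : ℝ) - y| = 1 + y by rw [abs_of_nonpos (by linarith)]; ring,
    show |(-3 : ℝ) - ε| = 3 + ε by rw [abs_of_nonpos (by linarith)]; ring,
    show |(8 : ℝ) - y| = 8 - y from abs_of_nonneg (by linarith),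
    show |(12 : ℝ) - ε| = 12 - ε from abs_of_nonneg (by linarith),
    show |(5 : ℝ) - y| = y - 5 by rw [abs_of_nonpos (by linarith)]; ring,
    show |(13 : ℝ) - ε| = 13 - ε from abs_of_nonneg (by linarith),
    show |(7 : ℝ) - y| = 7 - y from abs_of_nonneg (by linarith),
    min_eq_right (by linarith : (4 + ε + 1 : ℝ) ≤ 16 + y),
    min_eq_right (by linarith : (3 + ε + 1 + 1 : ℝ) ≤ 15 + (1 + y)),
    min_eq_left (by linarith : (8 - y : ℝ) ≤ 12 - ε + 8 + 1),
    min_eq_left (by linarith : (1 + (y - 5) : ℝ) ≤ 13 - ε + 5 + 1),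
    min_eq_left (by linarith : (1 + (7 - y) : ℝ) ≤ 13 - ε + 7 + 1)]
  linarith
end
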